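/- Let 0 < α < 1, s < −1/2, and b₁, b₂ ∈ ℝ. Then there is no constant C > 0 such that the inequality ‖u·v‖_{L²(ℝ²)} ≤ C ‖⟨ξ⟩^{−1/2} ⟨τ − αξ³⟩^{b₁} ũ(ξ,τ)‖_{L²_{ξ,τ}(ℝ²)} · ‖⟨ξ⟩^{s} ⟨τ − ξ³⟩^{b₂} ṽ(ξ,τ)‖_{L²_{ξ,τ}(ℝ²)} holds for all functions u, v : ℝ² → ℂ whose space-time Fourier transforms are bounded measurable functions with compact support. That is, for every C > 0 there exist such u, v violating the inequality. -/

import Mathlib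

open MeasureTheory

/-- Inverse space-time Fourier transform on `ℝ²`:
`u(x,t) = (2π)⁻² ∫ e^{i(xξ+tτ)} g(ξ,τ) dξ dτ`.  A function `u : ℝ² → ℂ` whose
space-time Fourier transform is the (nice) function `g` is recovered from `g`
by this formula. -/
noncomputable def spaceTimeFourierInv (g : ℝ × ℝ → ℂ) : ℝ × ℝ → ℂ :=
  fun q => (((2 * Real.pi) ^ 2 : ℝ) : ℂ)⁻¹ * ∫ p : ℝ × ℝ,
    Complex.exp (Complex.I * ((q.1 * p.1 + q.2 * p.2 : ℝ) : ℂ)) * g p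

/-- `g` is a bounded measurable function with compact support. -/
def BddMeasCompSupp (g : ℝ × ℝ → ℂ) : Prop :=
  Measurable g ∧ (∃ M : ℝ, ∀ p, ‖g p‖ ≤ M) ∧ HasCompactSupport g

section helpers
open Set Complex
open scoped ENNReal NNReal

lemma oneD_lower (a L x : ℝ) (hL : 0 < L) (hx : |x| * L ≤ 1/4) :
    L/2 ≤ ‖∫ ξ in Icc a (a+L), Complex.exp (Complex.I * (x*ξ))‖ := by
  have hcont : Continuous fun ξ : ℝ => Complex.exp (Complex.I * (x*ξ)) := by fun_prop
  have hint : IntegrableOn (fun ξ : ℝ => Complex.exp (Complex.I * (x*ξ))) (Icc a (a+L)) volume :=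
    hcont.integrableOn_Icc
  have hvol : (volume (Icc a (a+L))).toReal = L := by
    simp [Real.volume_Icc]; linarith
  have hconst : ∫ _ξ in Icc a (a+L), Complex.exp (Complex.I * (x*a)) =
      (L : ℂ) * Complex.exp (Complex.I * (x*a)) := by
    rw [setIntegral_const, measureReal_def, hvol]
    simp [Complex.real_smul]
  have hdiff : ‖(∫ ξ in Icc a (a+L), Complex.exp (Complex.I * (x*ξ))) -
      (L : ℂ) * Complex.exp (Complex.I * (x*a))‖ ≤ L/2 := by
    rw [← hconst, ← integral_sub hint (integrableOn_const (by simp [Real.volume_Icc]))]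
    have hbd : ∀ ξ ∈ Icc a (a+L), ‖Complex.exp (Complex.I * (x*ξ)) - Complex.exp (Complex.I * (x*a))‖ ≤ 1/2 := by
      intro ξ hξ
      obtain ⟨hξ1, hξ2⟩ := hξ
      have heq : Complex.exp (Complex.I * (x*ξ)) - Complex.exp (Complex.I * (x*a)) =
          Complex.exp (Complex.I * (x*a)) * (Complex.exp (Complex.I * (x*(ξ-a))) - 1) := by
        rw [mul_sub, ← Complex.exp_add]; ring_nf
      rw [heq, norm_mul]
      have h1 : ‖Complex.exp (Complex.I * (x*a))‖ = 1 := by simp [Complex.norm_exp]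
      rw [h1, one_mul]
      have hsmall : ‖Complex.I * (x*(ξ-a))‖ ≤ 1/4 := by
        have habs : ‖Complex.I * (x*(ξ-a))‖ = |x| * |ξ - a| := by
          rw [norm_mul, norm_mul, Complex.norm_I, one_mul, ← Complex.ofReal_sub,
            Complex.norm_real, Complex.norm_real, Real.norm_eq_abs, Real.norm_eq_abs]
        rw [habs]
        have h2 : |ξ - a| ≤ L := by rw [_root_.abs_of_nonneg (by linarith)]; linarith
        calc |x| * |ξ - a| ≤ |x| * L := mul_le_mul_of_nonneg_left h2 (abs_nonneg x)
          _ ≤ 1/4 := hx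
      calc ‖Complex.exp (Complex.I * (x*(ξ-a))) - 1‖
          ≤ 2 * ‖Complex.I * (x*(ξ-a))‖ :=
            Complex.norm_exp_sub_one_le (by linarith)
        _ ≤ 1/2 := by linarith
    calc ‖∫ ξ in Icc a (a+L), (Complex.exp (Complex.I * (x*ξ)) - Complex.exp (Complex.I * (x*a)))‖
        ≤ (1/2) * (volume (Icc a (a+L))).toReal :=
          (measureReal_def volume (Icc a (a+L))) ▸ norm_setIntegral_le_of_norm_le_const
            (by rw [Real.volume_Icc]; exact ENNReal.ofReal_lt_top) hbd
      _ ≤ L/2 := by rw [hvol]; linarith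
  have htri := norm_sub_norm_le ((L : ℂ) * Complex.exp (Complex.I * (x*a)))
    (∫ ξ in Icc a (a+L), Complex.exp (Complex.I * (x*ξ)))
  have hLnorm : ‖(L : ℂ) * Complex.exp (Complex.I * (x*a))‖ = L := by
    rw [norm_mul]
    simp [Complex.norm_exp, abs_of_pos hL]
  rw [hLnorm, norm_sub_rev] at htri
  linarith

lemma stfi_eval (a c L x t : ℝ) :
    spaceTimeFourierInv ((Set.Icc (a, c) (a+L, c+1)).indicator 1) (x, t)
      = (((2 * Real.pi) ^ 2 : ℝ) : ℂ)⁻¹ *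
        ((∫ ξ in Icc a (a+L), Complex.exp (Complex.I * (x*ξ))) *
         (∫ τ in Icc c (c+1), Complex.exp (Complex.I * (t*τ)))) := by
  unfold spaceTimeFourierInv
  congr 1
  have h1 : ∀ p : ℝ × ℝ,
      Complex.exp (Complex.I * ((x * p.1 + t * p.2 : ℝ) : ℂ)) * ((Set.Icc (a, c) (a+L, c+1)).indicator 1 p)
      = (Set.Icc (a, c) (a+L, c+1)).indicator
          (fun p => Complex.exp (Complex.I * (x*p.1)) * Complex.exp (Complex.I * (t*p.2))) p := by
    intro p
    by_cases hp : p ∈ Set.Icc (a, c) (a+L, c+1)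
    · rw [Set.indicator_of_mem hp, Set.indicator_of_mem hp]
      simp only [Pi.one_apply, mul_one]
      rw [← Complex.exp_add]
      push_cast
      ring_nf
    · rw [Set.indicator_of_notMem hp, Set.indicator_of_notMem hp, mul_zero]
  simp_rw [h1]
  rw [integral_indicator measurableSet_Icc]
  rw [Set.Icc_prod_eq]
  simp only []
  rw [Measure.volume_eq_prod]
  exact setIntegral_prod_mul (μ := (volume : Measure ℝ)) (ν := (volume : Measure ℝ))
    (fun ξ => Complex.exp (Complex.I * (x*ξ)))
    (fun τ => Complex.exp (Complex.I * (t*τ))) _ _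

lemma vol_Icc2 (a b c d : ℝ) : volume (Set.Icc (a,c) (b,d)) =
    ENNReal.ofReal (b-a) * ENNReal.ofReal (d-c) := by
  rw [Set.Icc_prod_eq, Measure.volume_eq_prod, Measure.prod_prod]
  simp [Real.volume_Icc]

lemma eLp_upper (w : ℝ × ℝ → ℝ) (R : Set (ℝ × ℝ)) (hR : MeasurableSet R) (m : ℝ) (hm : 0 ≤ m)
    (hw : ∀ p ∈ R, |w p| ≤ m) :
    eLpNorm (fun p => w p * ‖R.indicator (1 : ℝ × ℝ → ℂ) p‖) 2 volume ≤
      ENNReal.ofReal m * (volume R) ^ (1/(2:ℝ)) := by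
  have h1 : eLpNorm (fun p => w p * ‖R.indicator (1 : ℝ × ℝ → ℂ) p‖) 2 volume ≤
      eLpNorm (R.indicator (fun _ => m)) 2 volume := by
    apply eLpNorm_mono
    intro p
    by_cases hp : p ∈ R
    · rw [Set.indicator_of_mem hp, Set.indicator_of_mem hp]
      simp only [Pi.one_apply, norm_one, mul_one, Real.norm_eq_abs]
      rw [_root_.abs_of_nonneg hm]
      exact hw p hp
    · rw [Set.indicator_of_notMem hp, Set.indicator_of_notMem hp]
      simp
  refine h1.trans ?_
  rw [eLpNorm_indicator_const hR (by norm_num) (by norm_num)]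
  have : ‖m‖ₑ = ENNReal.ofReal m := by
    rw [← ofReal_norm_eq_enorm, Real.norm_eq_abs, _root_.abs_of_nonneg hm]
  rw [this]
  norm_num

lemma eLp_lower (f : ℝ × ℝ → ℂ) (A : Set (ℝ × ℝ)) (hA : MeasurableSet A) (m : ℝ) (hm : 0 ≤ m)
    (hf : ∀ q ∈ A, m ≤ ‖f q‖) :
    ENNReal.ofReal m * (volume A) ^ (1/(2:ℝ)) ≤ eLpNorm f 2 volume := by
  have h1 : eLpNorm (A.indicator (fun _ => m)) 2 volume ≤ eLpNorm f 2 volume := by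
    apply eLpNorm_mono
    intro p
    by_cases hp : p ∈ A
    · rw [Set.indicator_of_mem hp]
      rw [Real.norm_eq_abs, _root_.abs_of_nonneg hm]
      exact hf p hp
    · rw [Set.indicator_of_notMem hp]; simp
  refine le_trans ?_ h1
  rw [eLpNorm_indicator_const hA (by norm_num) (by norm_num)]
  have : ‖m‖ₑ = ENNReal.ofReal m := by
    rw [← ofReal_norm_eq_enorm, Real.norm_eq_abs, _root_.abs_of_nonneg hm]
  rw [this]
  norm_num

lemma bmcs_aux (p q : ℝ × ℝ) :
    Measurable ((Set.Icc p q).indicator (1 : ℝ × ℝ → ℂ)) ∧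
    (∀ z, ‖(Set.Icc p q).indicator (1 : ℝ × ℝ → ℂ) z‖ ≤ 1) ∧
    HasCompactSupport ((Set.Icc p q).indicator (1 : ℝ × ℝ → ℂ)) := by
  refine ⟨measurable_const.indicator measurableSet_Icc, ?_,
    HasCompactSupport.intro (isCompact_Icc (a := p) (b := q))
      (fun x hx => Set.indicator_of_notMem hx _)⟩
  intro z
  by_cases hz : z ∈ Set.Icc p q
  · rw [Set.indicator_of_mem hz]; simp
  · rw [Set.indicator_of_notMem hz]; simp

lemma rpow_half_sq (x : ℝ) (hx : 0 ≤ x) : (x^2 : ℝ) ^ ((1:ℝ)/2) = x := by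
  rw [← Real.rpow_natCast x 2, ← Real.rpow_mul hx]
  norm_num

lemma pow_le_W (b e : ℝ) (h1 : 1 ≤ b) (h9 : b ≤ 9) : b ^ e ≤ max ((9:ℝ)^e) 1 := by
  rcases le_or_gt 0 e with he | he
  · exact le_max_of_le_left (Real.rpow_le_rpow (by linarith) h9 he)
  · exact le_max_of_le_right (Real.rpow_le_one_of_one_le_of_nonpos h1 he.le)

lemma cube_mono (a b : ℝ) (h : a ≤ b) : a^3 ≤ b^3 := by
  nlinarith [sq_nonneg (a+b), sq_nonneg a, sq_nonneg b, sq_nonneg (a-b)]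

end helpers

set_option maxHeartbeats 1000000 in
theorem stmt_11 (α s b₁ b₂ : ℝ) (hα0 : 0 < α) (hα1 : α < 1) (hs : s < -(1/2)) :
    ∀ C : ℝ, 0 < C →
      ∃ g h : ℝ × ℝ → ℂ,  -- the space-time Fourier transforms of `u, v`
        BddMeasCompSupp g ∧ BddMeasCompSupp h ∧
        ¬ (eLpNorm (fun q : ℝ × ℝ =>
              spaceTimeFourierInv g q * spaceTimeFourierInv h q) 2 volume ≤
            ENNReal.ofReal C *
              (eLpNorm (fun p : ℝ × ℝ =>
                  ((1 + |p.1|) ^ (-(1/2) : ℝ) * (1 + |p.2 - α * p.1 ^ 3|) ^ b₁) *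
                    ‖g p‖) 2 volume *
               eLpNorm (fun p : ℝ × ℝ =>
                  ((1 + |p.1|) ^ s * (1 + |p.2 - p.1 ^ 3|) ^ b₂) * ‖h p‖) 2 volume)) := by
  intro C hC
  set W₁ : ℝ := max ((9:ℝ) ^ b₁) 1 with hW₁def
  set W₂ : ℝ := max ((9:ℝ) ^ b₂) 1 with hW₂def
  have hW₁ : (1:ℝ) ≤ W₁ := le_max_right _ _
  have hW₂ : (1:ℝ) ≤ W₂ := le_max_right _ _
  have hπ : (0:ℝ) < 2 * Real.pi := by positivity
  set c₀ : ℝ := (32 * (2*Real.pi)^4)⁻¹ with hc₀def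
  have hc₀ : 0 < c₀ := by positivity
  set r : ℝ := -(s + 1/2) with hrdef
  have hr : 0 < r := by rw [hrdef]; linarith
  have hCW : (0:ℝ) < C*W₁*W₂ := mul_pos (mul_pos hC (by linarith)) (by linarith)
  obtain ⟨N, hN2, hNr⟩ : ∃ N : ℝ, 2 ≤ N ∧ C*W₁*W₂ < c₀ * N ^ r := by
    refine ⟨max 2 ((C*W₁*W₂/c₀ + 1) ^ (1/r)), le_max_left _ _, ?_⟩
    have hbase : (0:ℝ) ≤ C*W₁*W₂/c₀ + 1 := by positivity
    have h1 : C*W₁*W₂/c₀ + 1 = ((C*W₁*W₂/c₀ + 1) ^ (1/r)) ^ r := by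
      rw [← Real.rpow_mul hbase, one_div, inv_mul_cancel₀ hr.ne', Real.rpow_one]
    have h2 : C*W₁*W₂/c₀ + 1 ≤ (max 2 ((C*W₁*W₂/c₀ + 1) ^ (1/r))) ^ r :=
      h1.trans_le (Real.rpow_le_rpow (Real.rpow_nonneg hbase _) (le_max_right _ _) hr.le)
    have h3 : C*W₁*W₂/c₀ < (max 2 ((C*W₁*W₂/c₀ + 1) ^ (1/r))) ^ r := by linarith
    calc C*W₁*W₂ = c₀ * (C*W₁*W₂/c₀) := by field_simp
      _ < _ := mul_lt_mul_of_pos_left h3 hc₀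
  have hN0 : (0:ℝ) < N := by linarith
  have hN1 : (1:ℝ) ≤ N := by linarith
  set δ : ℝ := (N^2)⁻¹ with hδdef
  have hδ0 : 0 < δ := inv_pos.mpr (pow_pos hN0 2)
  have hδN : δ * N^2 = 1 := by
    rw [hδdef]; field_simp
  have hδ1 : δ ≤ 1 := by
    have h4 : (1:ℝ) ≤ N^2 := by nlinarith
    rw [hδdef]
    calc (N^2)⁻¹ ≤ (1:ℝ)⁻¹ := by
          apply inv_anti₀ one_pos h4
      _ = 1 := inv_one
  have hNδ : N*δ ≤ 1 := by nlinarith [hδN, hN1, hN0, hδ0]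
  -- nonnegativity facts
  have haux1 : (0:ℝ) ≤ (N ^ (-(1/2):ℝ) * W₁) * N⁻¹ :=
    mul_nonneg (mul_nonneg (Real.rpow_nonneg hN0.le _) (by linarith)) (inv_nonneg.mpr hN0.le)
  have haux2 : (0:ℝ) ≤ (N ^ s * W₂) * N⁻¹ :=
    mul_nonneg (mul_nonneg (Real.rpow_nonneg hN0.le _) (by linarith)) (inv_nonneg.mpr hN0.le)
  -- the two rectangles
  refine ⟨(Set.Icc (N, α*N^3) (N+δ, α*N^3+1)).indicator 1,
         (Set.Icc (-N, -(N^3)) (-N+δ, -(N^3)+1)).indicator 1,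
         ⟨(bmcs_aux _ _).1, ⟨1, (bmcs_aux _ _).2.1⟩, (bmcs_aux _ _).2.2⟩,
         ⟨(bmcs_aux _ _).1, ⟨1, (bmcs_aux _ _).2.1⟩, (bmcs_aux _ _).2.2⟩, ?_⟩
  intro hle
  -- lower bound on the left side
  set m₀ : ℝ := (((2*Real.pi)^2)⁻¹ * (δ/4))^2 with hm₀def
  have hm₀ : 0 ≤ m₀ := sq_nonneg _
  set A : Set (ℝ × ℝ) := Set.Icc (-(N^2/4), -(1/4)) (N^2/4, 1/4) with hAdef
  have hnormu : ∀ x t : ℝ, |x| * δ ≤ 1/4 → |t| ≤ 1/4 →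
      ((2*Real.pi)^2)⁻¹ * (δ/4) ≤
        ‖spaceTimeFourierInv ((Set.Icc (N, α*N^3) (N+δ, α*N^3+1)).indicator 1) (x, t)‖ := by
    intro x t hx ht
    rw [stfi_eval, norm_mul, norm_mul]
    have h1 := oneD_lower N δ x hδ0 hx
    have h2 := oneD_lower (α*N^3) 1 t one_pos (by rw [mul_one]; exact ht)
    have hinv : ‖(((2 * Real.pi) ^ 2 : ℝ) : ℂ)⁻¹‖ = ((2*Real.pi)^2)⁻¹ := by
      rw [norm_inv, Complex.norm_real, Real.norm_eq_abs, _root_.abs_of_pos (by positivity)]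
    rw [hinv]
    have heq : ((2*Real.pi)^2)⁻¹ * (δ/4) = ((2*Real.pi)^2)⁻¹ * ((δ/2) * (1/2)) := by ring
    rw [heq]
    gcongr
  have hnormv : ∀ x t : ℝ, |x| * δ ≤ 1/4 → |t| ≤ 1/4 →
      ((2*Real.pi)^2)⁻¹ * (δ/4) ≤
        ‖spaceTimeFourierInv ((Set.Icc (-N, -(N^3)) (-N+δ, -(N^3)+1)).indicator 1) (x, t)‖ := by
    intro x t hx ht
    rw [stfi_eval, norm_mul, norm_mul]
    have h1 := oneD_lower (-N) δ x hδ0 hx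
    have h2 := oneD_lower (-(N^3)) 1 t one_pos (by rw [mul_one]; exact ht)
    have hinv : ‖(((2 * Real.pi) ^ 2 : ℝ) : ℂ)⁻¹‖ = ((2*Real.pi)^2)⁻¹ := by
      rw [norm_inv, Complex.norm_real, Real.norm_eq_abs, _root_.abs_of_pos (by positivity)]
    rw [hinv]
    have heq : ((2*Real.pi)^2)⁻¹ * (δ/4) = ((2*Real.pi)^2)⁻¹ * ((δ/2) * (1/2)) := by ring
    rw [heq]
    gcongr
  have hLHS : ENNReal.ofReal (m₀ * (N/2)) ≤
      eLpNorm (fun q : ℝ × ℝ =>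
        spaceTimeFourierInv ((Set.Icc (N, α*N^3) (N+δ, α*N^3+1)).indicator 1) q *
        spaceTimeFourierInv ((Set.Icc (-N, -(N^3)) (-N+δ, -(N^3)+1)).indicator 1) q) 2 volume := by
    have key := eLp_lower (fun q : ℝ × ℝ =>
        spaceTimeFourierInv ((Set.Icc (N, α*N^3) (N+δ, α*N^3+1)).indicator 1) q *
        spaceTimeFourierInv ((Set.Icc (-N, -(N^3)) (-N+δ, -(N^3)+1)).indicator 1) q)
      A measurableSet_Icc m₀ hm₀ ?_
    · refine le_trans (le_of_eq ?_) key
      have hvolA : volume A = ENNReal.ofReal ((N/2)^2) := by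
        rw [hAdef, vol_Icc2]
        have e1 : N^2/4 - -(N^2/4) = N^2/2 := by ring
        have e2 : (1:ℝ)/4 - -(1/4) = 1/2 := by ring
        rw [e1, e2, ← ENNReal.ofReal_mul (by positivity)]
        congr 1
        ring
      have hpow : (ENNReal.ofReal ((N/2)^2)) ^ (1/(2:ℝ)) = ENNReal.ofReal (N/2) := by
        rw [ENNReal.ofReal_rpow_of_pos (show (0:ℝ) < (N/2)^2 from pow_pos (by linarith) 2),
          rpow_half_sq (N/2) (by linarith)]
      rw [hvolA, hpow, ← ENNReal.ofReal_mul hm₀]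
    · rintro ⟨x, t⟩ hq
      simp only [hAdef, Set.mem_Icc, Prod.le_def] at hq
      obtain ⟨⟨hx1, ht1⟩, hx2, ht2⟩ := hq
      have hx : |x| * δ ≤ 1/4 := by
        have hax : |x| ≤ N^2/4 := abs_le.mpr ⟨by linarith, hx2⟩
        calc |x| * δ ≤ (N^2/4) * δ := mul_le_mul_of_nonneg_right hax hδ0.le
          _ = 1/4 := by nlinarith [hδN]
      have ht : |t| ≤ 1/4 := abs_le.mpr ⟨by linarith, ht2⟩
      rw [norm_mul]
      have hu := hnormu x t hx ht
      have hv := hnormv x t hx ht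
      rw [hm₀def, sq]
      exact mul_le_mul hu hv (mul_nonneg (by positivity) (by linarith)) (norm_nonneg _)
  -- upper bounds on the right side
  have hRHS1 : eLpNorm (fun p : ℝ × ℝ =>
      ((1 + |p.1|) ^ (-(1/2) : ℝ) * (1 + |p.2 - α * p.1 ^ 3|) ^ b₁) *
        ‖(Set.Icc (N, α*N^3) (N+δ, α*N^3+1)).indicator (1 : ℝ × ℝ → ℂ) p‖) 2 volume ≤
      ENNReal.ofReal ((N ^ (-(1/2):ℝ) * W₁) * N⁻¹) := by
    have key := eLp_upper (fun p : ℝ × ℝ =>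
        (1 + |p.1|) ^ (-(1/2) : ℝ) * (1 + |p.2 - α * p.1 ^ 3|) ^ b₁)
      (Set.Icc (N, α*N^3) (N+δ, α*N^3+1)) measurableSet_Icc
      (N ^ (-(1/2):ℝ) * W₁)
      (mul_nonneg (Real.rpow_nonneg hN0.le _) (by linarith)) ?_
    · refine key.trans (le_of_eq ?_)
      have hvolR : volume (Set.Icc ((N:ℝ), α*N^3) (N+δ, α*N^3+1)) = ENNReal.ofReal ((N⁻¹)^2) := by
        rw [vol_Icc2]
        have e1 : N + δ - N = δ := by ring
        have e2 : α*N^3 + 1 - α*N^3 = 1 := by ring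
        rw [e1, e2, ENNReal.ofReal_one, mul_one, hδdef, inv_pow]
      rw [hvolR, ENNReal.ofReal_rpow_of_pos (pow_pos (inv_pos.mpr hN0) 2),
        rpow_half_sq N⁻¹ (inv_nonneg.mpr hN0.le),
        ← ENNReal.ofReal_mul (mul_nonneg (Real.rpow_nonneg hN0.le _) (by linarith))]
    · rintro ⟨ξ, τ⟩ hp
      simp only [Set.mem_Icc, Prod.le_def] at hp
      obtain ⟨⟨hξ1, hτ1⟩, hξ2, hτ2⟩ := hp
      simp only
      rw [_root_.abs_of_nonneg (by positivity)]
      have hwa : (1 + |ξ|) ^ (-(1/2) : ℝ) ≤ N ^ (-(1/2):ℝ) := by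
        apply Real.rpow_le_rpow_of_nonpos hN0 _ (by norm_num)
        rw [_root_.abs_of_nonneg (by linarith)]
        linarith
      have hcube1 : N^3 ≤ ξ^3 := cube_mono _ _ hξ1
      have hc2' : (N+δ)^3 ≤ N^3 + 7 := by nlinarith [hδN, hδ0.le, hδ1, hN1, mul_nonneg (sub_nonneg.mpr hNδ) hδ0.le, mul_nonneg (sub_nonneg.mpr hδ1) (mul_nonneg hδ0.le hδ0.le), mul_nonneg (sub_nonneg.mpr hδ1) hδ0.le]
      have hcube2 : ξ^3 ≤ N^3 + 7 := le_trans (cube_mono ξ (N+δ) hξ2) hc2'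
      have hmod : |τ - α * ξ^3| ≤ 8 := by
        rw [abs_le]
        constructor
        · nlinarith
        · nlinarith
      have hwb : (1 + |τ - α * ξ^3|) ^ b₁ ≤ W₁ :=
        pow_le_W _ _ (by linarith [abs_nonneg (τ - α * ξ^3)]) (by linarith)
      exact mul_le_mul hwa hwb (Real.rpow_nonneg (by positivity) _)
        (Real.rpow_nonneg hN0.le _)
  have hRHS2 : eLpNorm (fun p : ℝ × ℝ =>
      ((1 + |p.1|) ^ s * (1 + |p.2 - p.1 ^ 3|) ^ b₂) *
        ‖(Set.Icc (-N, -(N^3)) (-N+δ, -(N^3)+1)).indicator (1 : ℝ × ℝ → ℂ) p‖) 2 volume ≤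
      ENNReal.ofReal ((N ^ s * W₂) * N⁻¹) := by
    have key := eLp_upper (fun p : ℝ × ℝ =>
        (1 + |p.1|) ^ s * (1 + |p.2 - p.1 ^ 3|) ^ b₂)
      (Set.Icc (-N, -(N^3)) (-N+δ, -(N^3)+1)) measurableSet_Icc
      (N ^ s * W₂)
      (mul_nonneg (Real.rpow_nonneg hN0.le _) (by linarith)) ?_
    · refine key.trans (le_of_eq ?_)
      have hvolR : volume (Set.Icc ((-N:ℝ), -(N^3)) (-N+δ, -(N^3)+1)) = ENNReal.ofReal ((N⁻¹)^2) := by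
        rw [vol_Icc2]
        have e1 : -N + δ - (-N) = δ := by ring
        have e2 : -(N^3) + 1 - (-(N^3)) = 1 := by ring
        rw [e1, e2, ENNReal.ofReal_one, mul_one, hδdef, inv_pow]
      rw [hvolR, ENNReal.ofReal_rpow_of_pos (pow_pos (inv_pos.mpr hN0) 2),
        rpow_half_sq N⁻¹ (inv_nonneg.mpr hN0.le),
        ← ENNReal.ofReal_mul (mul_nonneg (Real.rpow_nonneg hN0.le _) (by linarith))]
    · rintro ⟨ξ, τ⟩ hp
      simp only [Set.mem_Icc, Prod.le_def] at hp
      obtain ⟨⟨hξ1, hτ1⟩, hξ2, hτ2⟩ := hp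
      simp only
      rw [_root_.abs_of_nonneg (by positivity)]
      have hξneg : ξ ≤ 0 := by linarith
      have habsξ : |ξ| = -ξ := abs_of_nonpos hξneg
      have hwa : (1 + |ξ|) ^ s ≤ N ^ s := by
        apply Real.rpow_le_rpow_of_nonpos hN0 _ (by linarith)
        rw [habsξ]
        linarith
      have hcube1 : -(N^3) ≤ ξ^3 := by
        have hc := cube_mono (-N) ξ hξ1
        nlinarith [hc]
      have hc2' : (-N+δ)^3 ≤ -(N^3) + 7 := by nlinarith [hδN, hδ0.le, hδ1, hN1, mul_nonneg (sub_nonneg.mpr hNδ) hδ0.le, mul_nonneg (sub_nonneg.mpr hδ1) (mul_nonneg hδ0.le hδ0.le), mul_nonneg (sub_nonneg.mpr hδ1) hδ0.le]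
      have hcube2 : ξ^3 ≤ -(N^3) + 7 := le_trans (cube_mono ξ (-N+δ) hξ2) hc2'
      have hmod : |τ - ξ^3| ≤ 8 := by
        rw [abs_le]
        constructor
        · nlinarith
        · nlinarith
      have hwb : (1 + |τ - ξ^3|) ^ b₂ ≤ W₂ :=
        pow_le_W _ _ (by linarith [abs_nonneg (τ - ξ^3)]) (by linarith)
      exact mul_le_mul hwa hwb (Real.rpow_nonneg (by positivity) _)
        (Real.rpow_nonneg hN0.le _)
  -- combine
  have hchain : ENNReal.ofReal (m₀ * (N/2)) ≤
      ENNReal.ofReal (C * ((N ^ (-(1/2):ℝ) * W₁) * N⁻¹ * ((N ^ s * W₂) * N⁻¹))) := by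
    refine hLHS.trans (hle.trans ?_)
    calc ENNReal.ofReal C * (eLpNorm _ 2 volume * eLpNorm _ 2 volume)
        ≤ ENNReal.ofReal C * (ENNReal.ofReal ((N ^ (-(1/2):ℝ) * W₁) * N⁻¹) *
            ENNReal.ofReal ((N ^ s * W₂) * N⁻¹)) :=
          mul_le_mul' le_rfl (mul_le_mul' hRHS1 hRHS2)
      _ = ENNReal.ofReal (C * ((N ^ (-(1/2):ℝ) * W₁) * N⁻¹ * ((N ^ s * W₂) * N⁻¹))) := by
          rw [← ENNReal.ofReal_mul haux1, ← ENNReal.ofReal_mul hC.le]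
  have hreal : m₀ * (N/2) ≤ C * ((N ^ (-(1/2):ℝ) * W₁) * N⁻¹ * ((N ^ s * W₂) * N⁻¹)) :=
    (ENNReal.ofReal_le_ofReal_iff (mul_nonneg hC.le (mul_nonneg haux1 haux2))).mp hchain
  -- final numeric contradiction
  set X : ℝ := N ^ (s + 1/2 : ℝ) with hXdef
  have hX0 : 0 < X := Real.rpow_pos_of_pos hN0 _
  have hXr : X * N ^ r = 1 := by
    rw [hXdef, hrdef, ← Real.rpow_add hN0, show s + 1/2 + -(s+1/2) = (0:ℝ) by ring,
      Real.rpow_zero]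
  have hkey : C*W₁*W₂*X < c₀ := by
    have hmm := mul_lt_mul_of_pos_right hNr hX0
    calc C*W₁*W₂*X < c₀ * N ^ r * X := hmm
      _ = c₀ * (X * N ^ r) := by ring
      _ = c₀ := by rw [hXr, mul_one]
  have hprod : N ^ (-(1/2):ℝ) * N ^ s * N = X := by
    rw [hXdef]
    calc N ^ (-(1/2):ℝ) * N ^ s * N = N ^ (-(1/2):ℝ) * N ^ s * N ^ (1:ℝ) := by
          rw [Real.rpow_one]
      _ = N ^ (-(1/2) + s + 1 : ℝ) := by rw [← Real.rpow_add hN0, ← Real.rpow_add hN0]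
      _ = N ^ (s + 1/2 : ℝ) := by congr 1; ring
  have e1 : C * ((N ^ (-(1/2):ℝ) * W₁) * N⁻¹ * ((N ^ s * W₂) * N⁻¹)) =
      (C*W₁*W₂) * (N ^ (-(1/2):ℝ) * N ^ s * N) / N^3 := by
    field_simp
  have e2 : m₀ * (N/2) = c₀ / N^3 := by
    rw [hm₀def, hδdef, hc₀def]
    field_simp
    ring
  rw [e1, hprod, e2] at hreal
  have hN3 : (0:ℝ) < N^3 := pow_pos hN0 3
  have hmul := mul_le_mul_of_nonneg_right hreal hN3.le
  rw [div_mul_cancel₀ _ hN3.ne', div_mul_cancel₀ _ hN3.ne'] at hmul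
  linarith
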